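/- arXiv:1912.02552 — 5 statements merged into one kernel-verified Lean document; each statement's English description precedes it below -/
import Mathlib

section
/- If (Q,T) is separable and closed with ε ∈ Q ∩ T, then the hypothesis automaton H (states Q, initial state ε, transition δ(q,a) = the unique q' ∈ Q T-equivalent to q·a, accepting states {q ∈ Q : q ∈ L}) satisfies: for every q ∈ Q, the state reached by H from the initial state on input word q is q itself (i.e., access words reach themselves). -/
/-- `v` and `w` are `T`-equivalent w.r.t. language `L`. -/
def TEquiv {α : Type*} (L : Set (List α)) (T : Set (List α)) (v w : List α) : Prop :=
  ∀ u ∈ T, (v ++ u ∈ L ↔ w ++ u ∈ L)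

/-- In the hypothesis automaton of L* (states `Q`, initial state `ε`, transition
`δ q a` = the unique element of `Q` that is `T`-equivalent to `q·a`), every access
word `q ∈ Q`, read from the initial state `ε`, reaches the state `q` itself.
(`Q` is the prefix-closed set of access words of the L* algorithm.) -/
theorem lstar_access_words_reach_themselves {α : Type*}
    (L : Set (List α)) (Q T : Set (List α))
    (hεQ : ([] : List α) ∈ Q) (hεT : ([] : List α) ∈ T)
    (hpref : ∀ q ∈ Q, ∀ p : List α, p <+: q → p ∈ Q)
    (hsep : ∀ v ∈ Q, ∀ w ∈ Q, TEquiv L T v w → v = w)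
    (hclosed : ∀ q ∈ Q, ∀ a : α, ∃ q' ∈ Q, TEquiv L T (q ++ [a]) q')
    (δ : List α → α → List α)
    (hδ : ∀ q ∈ Q, ∀ a : α, δ q a ∈ Q ∧ TEquiv L T (q ++ [a]) (δ q a)) :
    ∀ q ∈ Q, List.foldl δ [] q = q := by
  intro q
  induction q using List.reverseRecOn with
  | nil => intro _; rfl
  | append_singleton p a ih =>
    intro hq
    have hp : p ∈ Q := hpref _ hq p ⟨[a], rfl⟩
    rw [List.foldl_append, ih hp, List.foldl_cons, List.foldl_nil]
    obtain ⟨h1, h2⟩ := hδ p hp a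
    exact hsep _ h1 _ hq fun u hu => (h2 u hu).symm
end

section
/- The product trajectory distribution is consistent: for any MDP M and DFA A over alphabet S, the probability of a finite state trajectory s₀s₁…sₙ under a policy ρ on the product MDP (where ρ may depend on the automaton component) equals the probability of the augmented trajectory (s₀,q₀)…(sₙ,qₙ) with the deterministically tracked automaton states qᵢ. Consequently, any history-dependent policy on M whose dependence on history factors through the DFA state can be realized as a stationary policy on the product MDP with the same trajectory distribution over S-components. -/
open scoped BigOperators

/-- Probability of observing the future state sequence `future` in the MDP with
transition kernel `Tr`, under the (randomized) history-dependent policy `ρ`,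
starting from current state `s` with past history `h` (so the full history so far
is `h ++ [s]`). -/
noncomputable def trajProbM {S A : Type*} [Fintype A]
    (Tr : S → A → S → ℝ) (ρ : List S → A → ℝ) :
    List S → S → List S → ℝ
  | _, _, [] => 1
  | h, s, s' :: rest =>
      (∑ a, ρ (h ++ [s]) a * Tr s a s') * trajProbM Tr ρ (h ++ [s]) s' rest

/-- Probability of observing the future `S`-component sequence `future` in the
product MDP (with the automaton component tracked deterministically by `δ`), under
the stationary policy `σp` on product states, starting from product state `(s,q)`. -/
noncomputable def trajProbP {S A SA : Type*} [Fintype A]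
    (Tr : S → A → S → ℝ) (δ : SA → S → SA) (σp : S × SA → A → ℝ) :
    S × SA → List S → ℝ
  | _, [] => 1
  | (s, q), s' :: rest =>
      (∑ a, σp (s, q) a * Tr s a s') * trajProbP Tr δ σp (s', δ q s') rest

/-- Consistency of the product trajectory distribution: if a history-dependent
policy `ρ` on the MDP `M` factors through the DFA state (i.e. `ρ` depends only on
the current state and the automaton state `δ*(a₀, history)`, via the stationary
product policy `σp`), then the probability of every finite state trajectory under
`ρ` in `M` equals the probability of the corresponding augmented trajectory (with
deterministically tracked automaton states) under `σp` in the product MDP; hence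
such a policy is realized as a stationary policy on the product MDP with the same
trajectory distribution over `S`-components. -/
theorem product_trajectory_distribution_consistent
    {S A SA : Type*} [Fintype A]
    (Tr : S → A → S → ℝ) (δ : SA → S → SA) (a₀ : SA)
    (ρ : List S → A → ℝ) (σp : S × SA → A → ℝ)
    (hfactor : ∀ (h : List S) (s : S) (a : A),
      ρ (h ++ [s]) a = σp (s, List.foldl δ a₀ (h ++ [s])) a) :
    ∀ (future h : List S) (s : S),
      trajProbM Tr ρ h s future
        = trajProbP Tr δ σp (s, List.foldl δ a₀ (h ++ [s])) future := by
  intro future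
  induction future with
  | nil => intro h s; simp [trajProbM, trajProbP]
  | cons s' rest ih =>
      intro h s
      rw [trajProbM, trajProbP]
      congr 1
      · exact Finset.sum_congr rfl (fun a _ => by rw [hfactor])
      · have := ih (h ++ [s]) s'
        simpa [List.foldl_append] using this
end

section
/- Optimal value of the product MDP dominates: let M be an MDP with non-Markovian reward R̃ defined by a DFA A as above, and let M' be the product MDP with Markovian reward R'. Then every (possibly history-dependent) policy for M induces a policy for M' with the same expected discounted reward, and conversely; hence the optimal expected discounted value of the NMRDP M (over history-dependent policies) equals the optimal value of M' attained by a stationary deterministic policy on the product state space. -/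
open scoped BigOperators

/-- Expected reward received at step `n+1` in the MDP `M` under the
history-dependent deterministic policy `ρ`, starting from current state `s` with
past history `h` (full history so far `h ++ [s]`), where `Rt` is the
(non-Markovian) reward as a function of the full history. -/
noncomputable def expRewM {S A : Type*} [Fintype S]
    (Tr : S → A → S → ℝ) (ρ : List S → A) (Rt : List S → ℝ) :
    ℕ → List S → S → ℝ
  | 0, h, s => ∑ s', Tr s (ρ (h ++ [s])) s' * Rt (h ++ [s, s'])
  | n + 1, h, s => ∑ s', Tr s (ρ (h ++ [s])) s' * expRewM Tr ρ Rt n (h ++ [s]) s'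

/-- Expected reward received at step `n+1` in the product MDP under the stationary
policy `σp` on product states, with Markovian reward `R'` and DFA transition `δ`. -/
noncomputable def expRewP {S A SA : Type*} [Fintype S]
    (Tr : S → A → S → ℝ) (δ : SA → S → SA) (σp : S × SA → A) (R' : S × SA → ℝ) :
    ℕ → S × SA → ℝ
  | 0, (s, q) => ∑ s', Tr s (σp (s, q)) s' * R' (s', δ q s')
  | n + 1, (s, q) => ∑ s', Tr s (σp (s, q)) s' * expRewP Tr δ σp R' n (s', δ q s')

/-- Expected reward received at step `n+1` in the product MDP under a
history-dependent policy `ρ` (histories of the product MDP are in bijection with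
histories of `M`, the automaton component `q` being tracked deterministically). -/
noncomputable def expRewP' {S A SA : Type*} [Fintype S]
    (Tr : S → A → S → ℝ) (δ : SA → S → SA) (ρ : List S → A) (R' : S × SA → ℝ) :
    ℕ → List S → S → SA → ℝ
  | 0, h, s, q => ∑ s', Tr s (ρ (h ++ [s])) s' * R' (s', δ q s')
  | n + 1, h, s, q =>
      ∑ s', Tr s (ρ (h ++ [s])) s' * expRewP' Tr δ ρ R' n (h ++ [s]) s' (δ q s')

/-- Expected discounted value (rewards from step 1 on) of `ρ` in `M` from `s₀`. -/
noncomputable def valM {S A : Type*} [Fintype S]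
    (Tr : S → A → S → ℝ) (ρ : List S → A) (Rt : List S → ℝ) (γ : ℝ) (s₀ : S) : ℝ :=
  ∑' n : ℕ, γ ^ n * expRewM Tr ρ Rt n [] s₀

/-- Expected discounted value of the stationary policy `σp` in the product MDP. -/
noncomputable def valP {S A SA : Type*} [Fintype S]
    (Tr : S → A → S → ℝ) (δ : SA → S → SA) (σp : S × SA → A) (R' : S × SA → ℝ)
    (γ : ℝ) (sq : S × SA) : ℝ :=
  ∑' n : ℕ, γ ^ n * expRewP Tr δ σp R' n sq

/-- Expected discounted value of the history-dependent policy `ρ` in the product MDP. -/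
noncomputable def valP' {S A SA : Type*} [Fintype S]
    (Tr : S → A → S → ℝ) (δ : SA → S → SA) (ρ : List S → A) (R' : S × SA → ℝ)
    (γ : ℝ) (s₀ : S) (q₀ : SA) : ℝ :=
  ∑' n : ℕ, γ ^ n * expRewP' Tr δ ρ R' n [] s₀ q₀

section AuxLemmas

variable {S : Type*} [Fintype S]

private lemma abs_sum_mul_le {p f : S → ℝ} {B : ℝ}
    (hp : ∀ s, 0 ≤ p s) (hsum : ∑ s, p s = 1) (hf : ∀ s, |f s| ≤ B) :
    |∑ s, p s * f s| ≤ B := by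
  calc |∑ s, p s * f s| ≤ ∑ s, |p s * f s| := Finset.abs_sum_le_sum_abs _ _
    _ = ∑ s, p s * |f s| := by
        refine Finset.sum_congr rfl fun s _ => ?_
        rw [abs_mul, abs_of_nonneg (hp s)]
    _ ≤ ∑ s, p s * B := Finset.sum_le_sum fun s _ =>
        mul_le_mul_of_nonneg_left (hf s) (hp s)
    _ = B := by rw [← Finset.sum_mul, hsum, one_mul]

private lemma sum_mul_le_of_le {p : S → ℝ} {f : S → ℝ} {c : ℝ}
    (hp : ∀ s, 0 ≤ p s) (hsum : ∑ s, p s = 1) (hf : ∀ s, f s ≤ c) :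
    ∑ s, p s * f s ≤ c := by
  calc ∑ s, p s * f s ≤ ∑ s, p s * c := Finset.sum_le_sum fun s _ =>
        mul_le_mul_of_nonneg_left (hf s) (hp s)
    _ = c := by rw [← Finset.sum_mul, hsum, one_mul]

private lemma summable_geom_of_abs_le {γ B : ℝ} (hγ0 : 0 ≤ γ) (hγ1 : γ < 1)
    {e : ℕ → ℝ} (hB : ∀ n, |e n| ≤ B) : Summable (fun n => γ ^ n * e n) := by
  refine Summable.of_norm_bounded (g := fun n => γ ^ n * B)
    ((summable_geometric_of_lt_one hγ0 hγ1).mul_right B) ?_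
  intro n
  rw [Real.norm_eq_abs, abs_mul, abs_pow, abs_of_nonneg hγ0]
  exact mul_le_mul_of_nonneg_left (hB n) (pow_nonneg hγ0 n)

private lemma abs_tsum_geom_le {γ B : ℝ} (hγ0 : 0 ≤ γ) (hγ1 : γ < 1)
    {e : ℕ → ℝ} (hB : ∀ n, |e n| ≤ B) :
    |∑' n : ℕ, γ ^ n * e n| ≤ B / (1 - γ) := by
  have hs := summable_geom_of_abs_le hγ0 hγ1 hB
  have hs' : Summable (fun n => γ ^ n * B) :=
    (summable_geometric_of_lt_one hγ0 hγ1).mul_right B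
  calc |∑' n : ℕ, γ ^ n * e n| ≤ ∑' n : ℕ, |γ ^ n * e n| := by
        have := norm_tsum_le_tsum_norm (f := fun n => γ ^ n * e n)
          (by simpa only [Real.norm_eq_abs] using hs.abs)
        simpa only [Real.norm_eq_abs] using this
    _ ≤ ∑' n : ℕ, γ ^ n * B := by
        refine Summable.tsum_le_tsum (fun n => ?_) hs.abs hs'
        rw [abs_mul, abs_pow, abs_of_nonneg hγ0]
        exact mul_le_mul_of_nonneg_left (hB n) (pow_nonneg hγ0 n)
    _ = B / (1 - γ) := by
        rw [tsum_mul_right, tsum_geometric_of_lt_one hγ0 hγ1, inv_mul_eq_div]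

private lemma tsum_geom_shift {γ B : ℝ} (hγ0 : 0 ≤ γ) (hγ1 : γ < 1)
    {e : ℕ → ℝ} (hB : ∀ n, |e n| ≤ B) :
    ∑' n : ℕ, γ ^ n * e n = e 0 + γ * ∑' n : ℕ, γ ^ n * e (n + 1) := by
  have hs := summable_geom_of_abs_le hγ0 hγ1 hB
  rw [Summable.tsum_eq_zero_add hs]
  simp only [pow_zero, one_mul]
  congr 1
  have h1 : (fun n : ℕ => γ ^ (n + 1) * e (n + 1))
      = fun n : ℕ => γ * (γ ^ n * e (n + 1)) := by
    funext n; ring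
  rw [h1, tsum_mul_left]

private lemma tsum_geom_exchange {γ : ℝ} (p : S → ℝ) (u : S → ℕ → ℝ)
    (hsm : ∀ s, Summable (fun n => γ ^ n * u s n)) :
    ∑' n : ℕ, γ ^ n * (∑ s, p s * u s n) = ∑ s, p s * ∑' n : ℕ, γ ^ n * u s n := by
  have h1 : ∀ n : ℕ, γ ^ n * (∑ s, p s * u s n) = ∑ s, p s * (γ ^ n * u s n) := by
    intro n; rw [Finset.mul_sum]; exact Finset.sum_congr rfl fun s _ => by ring
  simp only [h1]
  rw [Summable.tsum_finsetSum (fun s _ => (hsm s).mul_left (p s))]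
  exact Finset.sum_congr rfl fun s _ => tsum_mul_left

private lemma abs_sup'_sub_sup'_le {ι : Type*} (s : Finset ι) (hs : s.Nonempty)
    (f g : ι → ℝ) {c : ℝ} (h : ∀ i ∈ s, |f i - g i| ≤ c) :
    |s.sup' hs f - s.sup' hs g| ≤ c := by
  rw [abs_sub_le_iff]
  constructor
  · rw [sub_le_iff_le_add]
    refine Finset.sup'_le _ _ fun i hi => ?_
    have h1 := (abs_sub_le_iff.mp (h i hi)).1
    have h2 := Finset.le_sup' g hi
    linarith
  · rw [sub_le_iff_le_add]
    refine Finset.sup'_le _ _ fun i hi => ?_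
    have h1 := (abs_sub_le_iff.mp (h i hi)).2
    have h2 := Finset.le_sup' f hi
    linarith

end AuxLemmas

section MdpAux

variable {S A SA : Type*} [Fintype S] [Fintype A] [Fintype SA]

private lemma abs_expRewM_le (Tr : S → A → S → ℝ) (ρ : List S → A) (Rt : List S → ℝ)
    (htr_nonneg : ∀ s a s', 0 ≤ Tr s a s') (htr_sum : ∀ s a, ∑ s', Tr s a s' = 1)
    {B : ℝ} (hB : ∀ w, |Rt w| ≤ B) :
    ∀ (n : ℕ) (h : List S) (s : S), |expRewM Tr ρ Rt n h s| ≤ B := by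
  intro n
  induction n with
  | zero =>
    intro h s
    simp only [expRewM]
    exact abs_sum_mul_le (fun s' => htr_nonneg _ _ _) (htr_sum _ _) (fun s' => hB _)
  | succ n ih =>
    intro h s
    simp only [expRewM]
    exact abs_sum_mul_le (fun s' => htr_nonneg _ _ _) (htr_sum _ _) (fun s' => ih _ _)

private lemma abs_expRewP'_le (Tr : S → A → S → ℝ) (δ : SA → S → SA)
    (ρ : List S → A) (R' : S × SA → ℝ)
    (htr_nonneg : ∀ s a s', 0 ≤ Tr s a s') (htr_sum : ∀ s a, ∑ s', Tr s a s' = 1)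
    {B : ℝ} (hB : ∀ x, |R' x| ≤ B) :
    ∀ (n : ℕ) (h : List S) (s : S) (q : SA), |expRewP' Tr δ ρ R' n h s q| ≤ B := by
  intro n
  induction n with
  | zero =>
    intro h s q
    simp only [expRewP']
    exact abs_sum_mul_le (fun s' => htr_nonneg _ _ _) (htr_sum _ _) (fun s' => hB _)
  | succ n ih =>
    intro h s q
    simp only [expRewP']
    exact abs_sum_mul_le (fun s' => htr_nonneg _ _ _) (htr_sum _ _) (fun s' => ih _ _ _)

private lemma abs_expRewP_le (Tr : S → A → S → ℝ) (δ : SA → S → SA)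
    (σp : S × SA → A) (R' : S × SA → ℝ)
    (htr_nonneg : ∀ s a s', 0 ≤ Tr s a s') (htr_sum : ∀ s a, ∑ s', Tr s a s' = 1)
    {B : ℝ} (hB : ∀ x, |R' x| ≤ B) :
    ∀ (n : ℕ) (x : S × SA), |expRewP Tr δ σp R' n x| ≤ B := by
  intro n
  induction n with
  | zero =>
    intro ⟨s, q⟩
    simp only [expRewP]
    exact abs_sum_mul_le (fun s' => htr_nonneg _ _ _) (htr_sum _ _) (fun s' => hB _)
  | succ n ih =>
    intro ⟨s, q⟩
    simp only [expRewP]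
    exact abs_sum_mul_le (fun s' => htr_nonneg _ _ _) (htr_sum _ _) (fun s' => ih _)

private lemma getLast!_append_singleton {α : Type*} [Inhabited α] (l : List α) (a : α) :
    (l ++ [a]).getLast! = a :=
  List.getLast!_of_getLast? List.getLast?_concat

private lemma expRewM_eq_expRewP' (Tr : S → A → S → ℝ) (ρ : List S → A)
    (δ : SA → S → SA) (a₀ : SA) (Rt : List S → ℝ) (R' : S × SA → ℝ)
    (hmatch : ∀ (w : List S) (s' : S),
      Rt (w ++ [s']) = R' (s', δ (List.foldl δ a₀ w) s')) :
    ∀ (n : ℕ) (h : List S) (s : S),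
      expRewM Tr ρ Rt n h s = expRewP' Tr δ ρ R' n h s (List.foldl δ a₀ (h ++ [s])) := by
  intro n
  induction n with
  | zero =>
    intro h s
    simp only [expRewM, expRewP']
    refine Finset.sum_congr rfl fun s' _ => ?_
    have h1 : h ++ [s, s'] = (h ++ [s]) ++ [s'] := by simp
    rw [h1, hmatch]
  | succ n ih =>
    intro h s
    simp only [expRewM, expRewP']
    refine Finset.sum_congr rfl fun s' _ => ?_
    rw [ih (h ++ [s]) s']
    have h2 : List.foldl δ a₀ ((h ++ [s]) ++ [s'])
        = δ (List.foldl δ a₀ (h ++ [s])) s' := by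
      rw [List.foldl_append]; rfl
    rw [h2]

private lemma expRewM_eq_expRewP [Inhabited S] (Tr : S → A → S → ℝ) (σp : S × SA → A)
    (δ : SA → S → SA) (a₀ : SA) (Rt : List S → ℝ) (R' : S × SA → ℝ)
    (hmatch : ∀ (w : List S) (s' : S),
      Rt (w ++ [s']) = R' (s', δ (List.foldl δ a₀ w) s')) :
    ∀ (n : ℕ) (h : List S) (s : S),
      expRewM Tr (fun w => σp (w.getLast!, List.foldl δ a₀ w)) Rt n h s
        = expRewP Tr δ σp R' n (s, List.foldl δ a₀ (h ++ [s])) := by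
  intro n
  induction n with
  | zero =>
    intro h s
    simp only [expRewM, expRewP]
    refine Finset.sum_congr rfl fun s' _ => ?_
    rw [getLast!_append_singleton]
    have h1 : h ++ [s, s'] = (h ++ [s]) ++ [s'] := by simp
    rw [h1, hmatch]
  | succ n ih =>
    intro h s
    simp only [expRewM, expRewP]
    refine Finset.sum_congr rfl fun s' _ => ?_
    rw [getLast!_append_singleton, ih (h ++ [s]) s']
    have h2 : List.foldl δ a₀ ((h ++ [s]) ++ [s'])
        = δ (List.foldl δ a₀ (h ++ [s])) s' := by
      rw [List.foldl_append]; rfl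
    rw [h2]

private lemma expRewP'_tsum_rec (Tr : S → A → S → ℝ) (δ : SA → S → SA)
    (ρ : List S → A) (R' : S × SA → ℝ)
    (htr_nonneg : ∀ s a s', 0 ≤ Tr s a s') (htr_sum : ∀ s a, ∑ s', Tr s a s' = 1)
    {B γ : ℝ} (hB : ∀ x, |R' x| ≤ B) (hγ0 : 0 ≤ γ) (hγ1 : γ < 1)
    (h : List S) (s : S) (q : SA) :
    ∑' n : ℕ, γ ^ n * expRewP' Tr δ ρ R' n h s q
      = ∑ s', Tr s (ρ (h ++ [s])) s' * (R' (s', δ q s')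
          + γ * ∑' n : ℕ, γ ^ n * expRewP' Tr δ ρ R' n (h ++ [s]) s' (δ q s')) := by
  have hb := abs_expRewP'_le Tr δ ρ R' htr_nonneg htr_sum hB
  rw [tsum_geom_shift hγ0 hγ1 (fun n => hb n h s q)]
  have h1 : ∀ n : ℕ, expRewP' Tr δ ρ R' (n + 1) h s q
      = ∑ s', Tr s (ρ (h ++ [s])) s' * expRewP' Tr δ ρ R' n (h ++ [s]) s' (δ q s') := by
    intro n; simp only [expRewP']
  simp only [h1]
  rw [tsum_geom_exchange (fun s' => Tr s (ρ (h ++ [s])) s')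
    (fun s' n => expRewP' Tr δ ρ R' n (h ++ [s]) s' (δ q s'))
    (fun s' => summable_geom_of_abs_le hγ0 hγ1 (fun n => hb n (h ++ [s]) s' (δ q s')))]
  simp only [expRewP']
  rw [Finset.mul_sum, ← Finset.sum_add_distrib]
  exact Finset.sum_congr rfl fun s' _ => by ring

private lemma valP_rec (Tr : S → A → S → ℝ) (δ : SA → S → SA)
    (σp : S × SA → A) (R' : S × SA → ℝ)
    (htr_nonneg : ∀ s a s', 0 ≤ Tr s a s') (htr_sum : ∀ s a, ∑ s', Tr s a s' = 1)
    {B γ : ℝ} (hB : ∀ x, |R' x| ≤ B) (hγ0 : 0 ≤ γ) (hγ1 : γ < 1)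
    (s : S) (q : SA) :
    valP Tr δ σp R' γ (s, q)
      = ∑ s', Tr s (σp (s, q)) s' * (R' (s', δ q s')
          + γ * valP Tr δ σp R' γ (s', δ q s')) := by
  have hb := abs_expRewP_le Tr δ σp R' htr_nonneg htr_sum hB
  unfold valP
  rw [tsum_geom_shift hγ0 hγ1 (fun n => hb n (s, q))]
  have h1 : ∀ n : ℕ, expRewP Tr δ σp R' (n + 1) (s, q)
      = ∑ s', Tr s (σp (s, q)) s' * expRewP Tr δ σp R' n (s', δ q s') := by
    intro n; simp only [expRewP]
  simp only [h1]
  rw [tsum_geom_exchange (fun s' => Tr s (σp (s, q)) s')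
    (fun s' n => expRewP Tr δ σp R' n (s', δ q s'))
    (fun s' => summable_geom_of_abs_le hγ0 hγ1 (fun n => hb n (s', δ q s')))]
  simp only [expRewP]
  rw [Finset.mul_sum, ← Finset.sum_add_distrib]
  exact Finset.sum_congr rfl fun s' _ => by ring

noncomputable def bellOp [Nonempty A] (Tr : S → A → S → ℝ) (δ : SA → S → SA)
    (R' : S × SA → ℝ) (γ : ℝ) (V : S × SA → ℝ) : S × SA → ℝ :=
  fun x => Finset.univ.sup' Finset.univ_nonempty
    (fun a => ∑ s', Tr x.1 a s' * (R' (s', δ x.2 s') + γ * V (s', δ x.2 s')))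

private lemma bellOp_dist [Nonempty A] (Tr : S → A → S → ℝ) (δ : SA → S → SA)
    (R' : S × SA → ℝ)
    (htr_nonneg : ∀ s a s', 0 ≤ Tr s a s') (htr_sum : ∀ s a, ∑ s', Tr s a s' = 1)
    {γ : ℝ} (hγ0 : 0 ≤ γ) (V W : S × SA → ℝ) :
    dist (bellOp Tr δ R' γ V) (bellOp Tr δ R' γ W) ≤ γ * dist V W := by
  rw [dist_pi_le_iff (mul_nonneg hγ0 dist_nonneg)]
  intro x
  rw [Real.dist_eq]
  refine abs_sup'_sub_sup'_le _ _ _ _ fun a _ => ?_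
  rw [← Finset.sum_sub_distrib]
  have h1 : ∀ s', Tr x.1 a s' * (R' (s', δ x.2 s') + γ * V (s', δ x.2 s'))
      - Tr x.1 a s' * (R' (s', δ x.2 s') + γ * W (s', δ x.2 s'))
      = Tr x.1 a s' * (γ * (V (s', δ x.2 s') - W (s', δ x.2 s'))) := by
    intro s'; ring
  simp only [h1]
  refine abs_sum_mul_le (fun s' => htr_nonneg _ _ _) (htr_sum _ _) (fun s' => ?_)
  rw [abs_mul, abs_of_nonneg hγ0]
  refine mul_le_mul_of_nonneg_left ?_ hγ0
  calc |V (s', δ x.2 s') - W (s', δ x.2 s')|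
      = dist (V (s', δ x.2 s')) (W (s', δ x.2 s')) := (Real.dist_eq _ _).symm
    _ ≤ dist V W := dist_le_pi_dist V W _

end MdpAux

/-- Let `M` be a finite MDP with non-Markovian reward `R̃` given by the DFA
`(S_A, S, δ, a₀, F)` (`R̃(history) = r` iff `δ*(a₀, history) ∈ F`), and `M'` the
product MDP with Markovian reward `R'((s,q)) = r` iff `q ∈ F`. Then
(i) every history-dependent policy `ρ` for `M` induces a (history-dependent)
policy for `M'` with the same expected discounted reward;
(ii) conversely, every stationary policy `σp` on `M'` induces a history-dependent
policy on `M` with the same expected discounted reward; and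
(iii) the optimal expected discounted value of the NMRDP `M` over
history-dependent policies equals the optimal value of `M'` attained over
stationary deterministic policies on the product state space. -/
theorem nmrdp_product_value_equivalence
    {S A SA : Type*} [Fintype S] [Fintype A] [Fintype SA] [Inhabited S] [Nonempty A]
    (Tr : S → A → S → ℝ)
    (htr_nonneg : ∀ s a s', 0 ≤ Tr s a s')
    (htr_sum : ∀ s a, ∑ s', Tr s a s' = 1)
    (δ : SA → S → SA) (a₀ : SA) (F : Set SA) [DecidablePred (· ∈ F)] (r : ℝ)
    (Rt : List S → ℝ)
    (hRt : ∀ w : List S, Rt w = if List.foldl δ a₀ w ∈ F then r else 0)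
    (R' : S × SA → ℝ)
    (hR' : ∀ (s : S) (q : SA), R' (s, q) = if q ∈ F then r else 0)
    (γ : ℝ) (hγ0 : 0 ≤ γ) (hγ1 : γ < 1) :
    (∀ (ρ : List S → A) (s₀ : S),
        valM Tr ρ Rt γ s₀ = valP' Tr δ ρ R' γ s₀ (δ a₀ s₀)) ∧
    (∀ (σp : S × SA → A) (s₀ : S),
        valM Tr (fun h => σp (h.getLast!, List.foldl δ a₀ h)) Rt γ s₀
          = valP Tr δ σp R' γ (s₀, δ a₀ s₀)) ∧
    (∀ s₀ : S,
        (⨆ ρ : List S → A, valM Tr ρ Rt γ s₀)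
          = ⨆ σp : S × SA → A, valP Tr δ σp R' γ (s₀, δ a₀ s₀)) := by
  have hrB : ∀ w, |Rt w| ≤ |r| := by
    intro w; rw [hRt w]; split
    · exact le_rfl
    · simpa using abs_nonneg r
  have hR'B : ∀ x : S × SA, |R' x| ≤ |r| := by
    rintro ⟨s, q⟩; rw [hR' s q]; split
    · exact le_rfl
    · simpa using abs_nonneg r
  have hmatch : ∀ (w : List S) (s' : S),
      Rt (w ++ [s']) = R' (s', δ (List.foldl δ a₀ w) s') := by
    intro w s'
    rw [hRt, hR', List.foldl_append]
    rfl
  have parti : ∀ (ρ : List S → A) (s₀ : S),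
      valM Tr ρ Rt γ s₀ = valP' Tr δ ρ R' γ s₀ (δ a₀ s₀) := by
    intro ρ s₀
    unfold valM valP'
    refine tsum_congr fun n => ?_
    congr 1
    have h1 := expRewM_eq_expRewP' Tr ρ δ a₀ Rt R' hmatch n [] s₀
    simpa using h1
  have partii : ∀ (σp : S × SA → A) (s₀ : S),
      valM Tr (fun h => σp (h.getLast!, List.foldl δ a₀ h)) Rt γ s₀
        = valP Tr δ σp R' γ (s₀, δ a₀ s₀) := by
    intro σp s₀
    unfold valM valP
    refine tsum_congr fun n => ?_
    congr 1
    have h1 := expRewM_eq_expRewP Tr σp δ a₀ Rt R' hmatch n [] s₀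
    simpa using h1
  refine ⟨parti, partii, fun s₀ => ?_⟩
  -- Bellman operator and its fixed point
  have hcontr : ContractingWith ⟨γ, hγ0⟩
      (bellOp Tr δ R' γ : (S × SA → ℝ) → (S × SA → ℝ)) := by
    constructor
    · exact_mod_cast hγ1
    · refine LipschitzWith.of_dist_le_mul fun V W => ?_
      exact bellOp_dist Tr δ R' htr_nonneg htr_sum hγ0 V W
  set Vs : (S × SA) → ℝ := ContractingWith.fixedPoint (bellOp Tr δ R' γ) hcontr with hVsdef
  have hfix : bellOp Tr δ R' γ Vs = Vs := hcontr.fixedPoint_isFixedPt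
  -- greedy stationary policy
  have hgreedy : ∀ x : S × SA, ∃ a : A,
      bellOp Tr δ R' γ Vs x
        = ∑ s', Tr x.1 a s' * (R' (s', δ x.2 s') + γ * Vs (s', δ x.2 s')) := by
    intro x
    obtain ⟨a, -, ha⟩ := Finset.exists_mem_eq_sup' (Finset.univ_nonempty (α := A))
      (fun a => ∑ s', Tr x.1 a s' * (R' (s', δ x.2 s') + γ * Vs (s', δ x.2 s')))
    exact ⟨a, ha⟩
  choose σs hσs using hgreedy
  have hval_rec : ∀ x : S × SA, valP Tr δ σs R' γ x
      = ∑ s', Tr x.1 (σs x) s' * (R' (s', δ x.2 s') + γ * valP Tr δ σs R' γ (s', δ x.2 s')) := by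
    rintro ⟨s, q⟩
    exact valP_rec Tr δ σs R' htr_nonneg htr_sum hR'B hγ0 hγ1 s q
  have hVs_rec : ∀ x : S × SA, Vs x
      = ∑ s', Tr x.1 (σs x) s' * (R' (s', δ x.2 s') + γ * Vs (s', δ x.2 s')) := by
    intro x
    conv_lhs => rw [← hfix]
    exact hσs x
  -- Vs is the value of the greedy stationary policy
  have hVP : valP Tr δ σs R' γ = Vs := by
    have hd : dist (valP Tr δ σs R' γ) Vs ≤ γ * dist (valP Tr δ σs R' γ) Vs := by
      rw [dist_pi_le_iff (mul_nonneg hγ0 dist_nonneg)]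
      intro x
      rw [Real.dist_eq, hval_rec x, hVs_rec x, ← Finset.sum_sub_distrib]
      have h1 : ∀ s',
          Tr x.1 (σs x) s' * (R' (s', δ x.2 s') + γ * valP Tr δ σs R' γ (s', δ x.2 s'))
            - Tr x.1 (σs x) s' * (R' (s', δ x.2 s') + γ * Vs (s', δ x.2 s'))
          = Tr x.1 (σs x) s'
              * (γ * (valP Tr δ σs R' γ (s', δ x.2 s') - Vs (s', δ x.2 s'))) := by
        intro s'; ring
      simp only [h1]
      refine abs_sum_mul_le (fun s' => htr_nonneg _ _ _) (htr_sum _ _) fun s' => ?_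
      rw [abs_mul, abs_of_nonneg hγ0]
      refine mul_le_mul_of_nonneg_left ?_ hγ0
      calc |valP Tr δ σs R' γ (s', δ x.2 s') - Vs (s', δ x.2 s')|
          = dist (valP Tr δ σs R' γ (s', δ x.2 s')) (Vs (s', δ x.2 s')) :=
            (Real.dist_eq _ _).symm
        _ ≤ dist (valP Tr δ σs R' γ) Vs := dist_le_pi_dist _ _ _
    have h0 : dist (valP Tr δ σs R' γ) Vs ≤ 0 := by
      nlinarith [dist_nonneg (x := valP Tr δ σs R' γ) (y := Vs)]
    exact dist_le_zero.mp h0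
  -- bounds
  have hVsB : ∀ x : S × SA, |Vs x| ≤ |r| / (1 - γ) := by
    intro x
    rw [← hVP]
    have h1 : valP Tr δ σs R' γ x = ∑' n : ℕ, γ ^ n * expRewP Tr δ σs R' n x := rfl
    rw [h1]
    exact abs_tsum_geom_le hγ0 hγ1
      (fun n => abs_expRewP_le Tr δ σs R' htr_nonneg htr_sum hR'B n x)
  have hWB : ∀ (ρ : List S → A) (h : List S) (s : S) (q : SA),
      |∑' n : ℕ, γ ^ n * expRewP' Tr δ ρ R' n h s q| ≤ |r| / (1 - γ) :=
    fun ρ h s q => abs_tsum_geom_le hγ0 hγ1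
      (fun n => abs_expRewP'_le Tr δ ρ R' htr_nonneg htr_sum hR'B n h s q)
  -- domination of any history-dependent policy by Vs
  have key : ∀ (n : ℕ) (ρ : List S → A) (h : List S) (s : S) (q : SA),
      (∑' m : ℕ, γ ^ m * expRewP' Tr δ ρ R' m h s q) - Vs (s, q)
        ≤ γ ^ n * (2 * (|r| / (1 - γ))) := by
    intro n
    induction n with
    | zero =>
      intro ρ h s q
      have h1 := abs_le.mp (hWB ρ h s q)
      have h2 := abs_le.mp (hVsB (s, q))
      simp only [pow_zero, one_mul]
      linarith [h1.2, h2.1]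
    | succ n ih =>
      intro ρ h s q
      rw [expRewP'_tsum_rec Tr δ ρ R' htr_nonneg htr_sum hR'B hγ0 hγ1 h s q]
      have hv : ∑ s', Tr s (ρ (h ++ [s])) s' * (R' (s', δ q s') + γ * Vs (s', δ q s'))
          ≤ Vs (s, q) := by
        have h2 := Finset.le_sup'
          (f := fun a => ∑ s', Tr s a s' * (R' (s', δ q s') + γ * Vs (s', δ q s')))
          (Finset.mem_univ (ρ (h ++ [s])))
        calc ∑ s', Tr s (ρ (h ++ [s])) s' * (R' (s', δ q s') + γ * Vs (s', δ q s'))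
            ≤ bellOp Tr δ R' γ Vs (s, q) := h2
          _ = Vs (s, q) := by rw [hfix]
      have hsub : (∑ s', Tr s (ρ (h ++ [s])) s'
              * (R' (s', δ q s') + γ * ∑' m : ℕ, γ ^ m * expRewP' Tr δ ρ R' m (h ++ [s]) s' (δ q s')))
            - (∑ s', Tr s (ρ (h ++ [s])) s' * (R' (s', δ q s') + γ * Vs (s', δ q s')))
          = ∑ s', Tr s (ρ (h ++ [s])) s'
              * (γ * ((∑' m : ℕ, γ ^ m * expRewP' Tr δ ρ R' m (h ++ [s]) s' (δ q s'))
                  - Vs (s', δ q s'))) := by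
        rw [← Finset.sum_sub_distrib]
        exact Finset.sum_congr rfl fun s' _ => by ring
      have hle : ∑ s', Tr s (ρ (h ++ [s])) s'
              * (γ * ((∑' m : ℕ, γ ^ m * expRewP' Tr δ ρ R' m (h ++ [s]) s' (δ q s'))
                  - Vs (s', δ q s')))
          ≤ γ ^ (n + 1) * (2 * (|r| / (1 - γ))) := by
        have hc : ∑ s', Tr s (ρ (h ++ [s])) s' * (γ * (γ ^ n * (2 * (|r| / (1 - γ)))))
            = γ ^ (n + 1) * (2 * (|r| / (1 - γ))) := by
          rw [← Finset.sum_mul, htr_sum, one_mul]; ring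
        rw [← hc]
        refine Finset.sum_le_sum fun s' _ => ?_
        refine mul_le_mul_of_nonneg_left ?_ (htr_nonneg _ _ _)
        exact mul_le_mul_of_nonneg_left (ih ρ (h ++ [s]) s' (δ q s')) hγ0
      linarith [hv, hsub, hle]
  -- pass to the limit
  have hdom : ∀ ρ : List S → A,
      valP' Tr δ ρ R' γ s₀ (δ a₀ s₀) ≤ Vs (s₀, δ a₀ s₀) := by
    intro ρ
    have hlim : Filter.Tendsto (fun n : ℕ => γ ^ n * (2 * (|r| / (1 - γ))))
        Filter.atTop (nhds 0) := by
      simpa using (tendsto_pow_atTop_nhds_zero_of_lt_one hγ0 hγ1).mul_const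
        (2 * (|r| / (1 - γ)))
    have hle := ge_of_tendsto' hlim (fun n => key n ρ [] s₀ (δ a₀ s₀))
    have h1 : valP' Tr δ ρ R' γ s₀ (δ a₀ s₀)
        = ∑' m : ℕ, γ ^ m * expRewP' Tr δ ρ R' m [] s₀ (δ a₀ s₀) := rfl
    linarith [hle, h1.le, h1.ge]
  -- boundedness of the two families
  have hbdd1 : BddAbove (Set.range fun ρ : List S → A => valM Tr ρ Rt γ s₀) := by
    refine ⟨|r| / (1 - γ), ?_⟩
    rintro _ ⟨ρ, rfl⟩
    have h1 := abs_tsum_geom_le hγ0 hγ1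
      (fun n => abs_expRewM_le Tr ρ Rt htr_nonneg htr_sum hrB n [] s₀)
    exact (abs_le.mp h1).2
  have hbdd2 : BddAbove (Set.range fun σp : S × SA → A =>
      valP Tr δ σp R' γ (s₀, δ a₀ s₀)) := by
    refine ⟨|r| / (1 - γ), ?_⟩
    rintro _ ⟨σp, rfl⟩
    have h1 := abs_tsum_geom_le hγ0 hγ1
      (fun n => abs_expRewP_le Tr δ σp R' htr_nonneg htr_sum hR'B n (s₀, δ a₀ s₀))
    exact (abs_le.mp h1).2
  apply le_antisymm
  · refine ciSup_le fun ρ => ?_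
    calc valM Tr ρ Rt γ s₀ = valP' Tr δ ρ R' γ s₀ (δ a₀ s₀) := parti ρ s₀
      _ ≤ Vs (s₀, δ a₀ s₀) := hdom ρ
      _ = valP Tr δ σs R' γ (s₀, δ a₀ s₀) := by rw [hVP]
      _ ≤ ⨆ σp : S × SA → A, valP Tr δ σp R' γ (s₀, δ a₀ s₀) := le_ciSup hbdd2 σs
  · refine ciSup_le fun σp => ?_
    calc valP Tr δ σp R' γ (s₀, δ a₀ s₀)
        = valM Tr (fun h => σp (h.getLast!, List.foldl δ a₀ h)) Rt γ s₀ :=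
          (partii σp s₀).symm
      _ ≤ ⨆ ρ : List S → A, valM Tr ρ Rt γ s₀ := le_ciSup hbdd1 _
end

section
/- A lower bound on |Q| in L*: if (Q,T) is separable then |Q| is at most the number of Myhill–Nerode equivalence classes of L; hence if L is regular with minimal DFA of n states, the set of access words Q in the L* algorithm never exceeds size n. -/
/-- A lower bound on `|Q|` in L*: if `(Q, T)` is separable then `|Q|` is at most
the Myhill–Nerode index of `L`. Here the Myhill–Nerode classes are given by a
classifying map `c : Σ* → Fin n` with `c v = c w` iff `v ≡_L w`
(so `L` regular with minimal DFA of `n` states); hence the set of access words in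
the L* algorithm never exceeds size `n`. -/
theorem access_words_bounded_by_nerode_index {α : Type*}
    (L : Set (List α)) (Q : Finset (List α)) (T : Set (List α))
    (hsep : ∀ v ∈ Q, ∀ w ∈ Q, TEquiv L T v w → v = w)
    (n : ℕ) (c : List α → Fin n)
    (hc : ∀ v w : List α, c v = c w ↔ ∀ u : List α, (v ++ u ∈ L ↔ w ++ u ∈ L)) :
    Q.card ≤ n := by
  have : Set.InjOn c Q := by
    intro v hv w hw h
    exact hsep v hv w hw (fun u _ => (hc v w).mp h u)
  calc Q.card = (Q.image c).card := (Finset.card_image_of_injOn this).symm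
    _ ≤ Fintype.card (Fin n) := Finset.card_le_univ _
    _ = n := Fintype.card_fin n
end

section
/- If (Q,T) is separable and |Q| equals the Myhill–Nerode index of the regular language L, then (Q,T) is closed and the hypothesis automaton H recognizes exactly L. -/
/-- If `(Q, T)` is separable with `ε ∈ Q ∩ T` and `|Q|` equals the Myhill–Nerode
index `n` of the regular language `L` (given by a classifying map
`c : Σ* → Fin n` with `c v = c w` iff `v ≡_L w`), then `(Q, T)` is closed, and
the hypothesis automaton `H` (states `Q`, initial state `ε`, transitions to the
unique `T`-equivalent access word, accepting states `{q ∈ Q | q ∈ L}`) recognizes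
exactly `L`: for every word `w`, the run of `H` on `w` ends in an accepting state
iff `w ∈ L`. -/
theorem full_access_set_gives_correct_hypothesis {α : Type*}
    (L : Set (List α)) (Q : Finset (List α)) (T : Set (List α))
    (hεQ : ([] : List α) ∈ Q) (hεT : ([] : List α) ∈ T)
    (hsep : ∀ v ∈ Q, ∀ w ∈ Q, TEquiv L T v w → v = w)
    (n : ℕ) (c : List α → Fin n)
    (hc : ∀ v w : List α, c v = c w ↔ ∀ u : List α, (v ++ u ∈ L ↔ w ++ u ∈ L))
    (hcard : Q.card = n) :
    (∀ q ∈ Q, ∀ a : α, ∃ q' ∈ Q, TEquiv L T (q ++ [a]) q') ∧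
    (∀ δ : List α → α → List α,
      (∀ q ∈ Q, ∀ a : α, δ q a ∈ Q ∧ TEquiv L T (q ++ [a]) (δ q a)) →
      ∀ w : List α, (List.foldl δ [] w ∈ L ↔ w ∈ L)) := by
  have hinj : ∀ v ∈ Q, ∀ w ∈ Q, c v = c w → v = w := fun v hv w hw h =>
    hsep v hv w hw (fun u _ => (hc v w).mp h u)
  have hsurj : ∀ x : List α, ∃ q ∈ Q, c q = c x := by
    have hbij : Function.Bijective (fun q : {q // q ∈ Q} => c q.1) := by
      refine (Fintype.bijective_iff_injective_and_card _).mpr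
        ⟨fun a b h => Subtype.ext (hinj _ a.2 _ b.2 h), by simp [hcard]⟩
    intro x
    obtain ⟨⟨q, hq⟩, hfq⟩ := hbij.2 (c x)
    exact ⟨q, hq, hfq⟩
  have hclo : ∀ q ∈ Q, ∀ a : α, ∃ q' ∈ Q, TEquiv L T (q ++ [a]) q' := by
    intro q hq a
    obtain ⟨q', hq'Q, hcq'⟩ := hsurj (q ++ [a])
    exact ⟨q', hq'Q, fun u _ => ((hc q' (q ++ [a])).mp hcq' u).symm⟩
  refine ⟨hclo, ?_⟩
  intro δ hδ w
  have key : ∀ w : List α, List.foldl δ [] w ∈ Q ∧ c (List.foldl δ [] w) = c w := by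
    intro w
    induction w using List.reverseRecOn with
    | nil => exact ⟨hεQ, rfl⟩
    | append_singleton w a ih =>
      obtain ⟨hqQ, hcq⟩ := ih
      set q := List.foldl δ [] w with hq
      rw [List.foldl_append]
      simp only [List.foldl_cons, List.foldl_nil]
      obtain ⟨hδQ, hδT⟩ := hδ q hqQ a
      refine ⟨hδQ, ?_⟩
      obtain ⟨q', hq'Q, hcq'⟩ := hsurj (q ++ [a])
      have h1 : TEquiv L T (δ q a) q' := by
        intro u hu
        rw [← hδT u hu]
        exact ((hc q' (q ++ [a])).mp hcq' u).symm
      have heq : δ q a = q' := hsep _ hδQ _ hq'Q h1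
      have h2 : c (q ++ [a]) = c (w ++ [a]) := by
        refine (hc _ _).mpr fun u => ?_
        simpa [List.append_assoc] using (hc q w).mp hcq ([a] ++ u)
      rw [heq, hcq', h2]
  have := (hc _ _).mp (key w).2 []
  simpa using this
end
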